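/- Let G be a Garside group of finite type. For every x ∈ G, iterated application of cyclic sliding eventually reaches a period: there exist integers N ≥ 0 and M > 0 such that 𝔰^{M+N}(x) = 𝔰^N(x). -/

import Mathlib

namespace GarsidePaper

/-- A Garside structure of finite type on a group `G`: a positive submonoid `P` with
`P ∩ P⁻¹ = {1}`, a Garside element `Δ ∈ P`, the prefix order `a ≼ b ↔ a⁻¹b ∈ P`
a lattice order (with meet `wedge` and join `vee`), the simple elements `[1,Δ]`
generating `G` and being finite, `Δ⁻¹PΔ = P`, a finite norm on positive elements,
and the infimum and supremum functions `inf`, `sup` characterised by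
`Δ^(inf x) ≼ x ≼ Δ^(sup x)` with `inf x` maximal and `sup x` minimal. -/
structure Garside (G : Type*) [Group G] where
  P : Submonoid G
  Δ : G
  purity : ∀ a : G, a ∈ P → a⁻¹ ∈ P → a = 1
  delta_mem : Δ ∈ P
  wedge : G → G → G
  vee : G → G → G
  wedge_le_left : ∀ a b : G, (wedge a b)⁻¹ * a ∈ P
  wedge_le_right : ∀ a b : G, (wedge a b)⁻¹ * b ∈ P
  le_wedge : ∀ a b c : G, c⁻¹ * a ∈ P → c⁻¹ * b ∈ P → c⁻¹ * wedge a b ∈ P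
  le_vee_left : ∀ a b : G, a⁻¹ * vee a b ∈ P
  le_vee_right : ∀ a b : G, b⁻¹ * vee a b ∈ P
  vee_le : ∀ a b c : G, a⁻¹ * c ∈ P → b⁻¹ * c ∈ P → (vee a b)⁻¹ * c ∈ P
  simples_generate : Subgroup.closure {a : G | a ∈ P ∧ a⁻¹ * Δ ∈ P} = (⊤ : Subgroup G)
  conj_pos : ∀ a : G, a ∈ P → Δ⁻¹ * a * Δ ∈ P
  norm : G → ℕ
  norm_exists : ∀ x : G, x ∈ P → x ≠ 1 →
    ∃ l : List G, (∀ s ∈ l, s ∈ P ∧ s ≠ 1) ∧ l.prod = x ∧ l.length = norm x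
  norm_max : ∀ x : G, x ∈ P → x ≠ 1 →
    ∀ l : List G, (∀ s ∈ l, s ∈ P ∧ s ≠ 1) → l.prod = x → l.length ≤ norm x
  simples_finite : Set.Finite {a : G | a ∈ P ∧ a⁻¹ * Δ ∈ P}
  inf : G → ℤ
  sup : G → ℤ
  inf_le : ∀ x : G, (Δ ^ inf x)⁻¹ * x ∈ P
  inf_max : ∀ (x : G) (p : ℤ), (Δ ^ p)⁻¹ * x ∈ P → p ≤ inf x
  le_sup : ∀ x : G, x⁻¹ * Δ ^ sup x ∈ P
  sup_min : ∀ (x : G) (q : ℤ), x⁻¹ * Δ ^ q ∈ P → sup x ≤ q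

namespace Garside

variable {G : Type*} [Group G]

/-- The prefix order `a ≼ b`. -/
def le (S : Garside G) (a b : G) : Prop := a⁻¹ * b ∈ S.P

/-- The canonical length `ℓ(x) = sup(x) - inf(x)`. -/
def len (S : Garside G) (x : G) : ℤ := S.sup x - S.inf x

/-- The initial factor `ι(x) = (x Δ^(-inf x)) ∧ Δ`. -/
def iota (S : Garside G) (x : G) : G := S.wedge (x * S.Δ ^ (-S.inf x)) S.Δ

/-- The preferred prefix `𝔭(x) = ι(x) ∧ ι(x⁻¹)`. -/
def pp (S : Garside G) (x : G) : G := S.wedge (S.iota x) (S.iota x⁻¹)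

/-- Cyclic sliding `𝔰(x) = 𝔭(x)⁻¹ x 𝔭(x)`. -/
def sl (S : Garside G) (x : G) : G := (S.pp x)⁻¹ * x * S.pp x

/-- The final factor `φ(x) = (Δ^(sup x - 1) ∧ x)⁻¹ x`. -/
def phi (S : Garside G) (x : G) : G := (S.wedge (S.Δ ^ (S.sup x - 1)) x)⁻¹ * x

/-- Conjugation by `Δ`: `τ(x) = Δ⁻¹ x Δ`. -/
def tau (S : Garside G) (x : G) : G := S.Δ⁻¹ * x * S.Δ

/-- Cycling `c(x) = ι(x)⁻¹ x ι(x)`. -/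
def cyc (S : Garside G) (x : G) : G := (S.iota x)⁻¹ * x * S.iota x

/-- Decycling `d(x) = φ(x) x φ(x)⁻¹`. -/
def dec (S : Garside G) (x : G) : G := S.phi x * x * (S.phi x)⁻¹

/-- The transport `α^{(1)} = 𝔭(x)⁻¹ α 𝔭(x^α)` of `α` at `x`. -/
def transport (S : Garside G) (x α : G) : G := (S.pp x)⁻¹ * α * S.pp (α⁻¹ * x * α)

/-- The iterated transport: `itTransport x i α = α^{(i)}`, the transport of `α^{(i-1)}`
at `𝔰^{i-1}(x)`, with `α^{(0)} = α`. -/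
def itTransport (S : Garside G) (x : G) : ℕ → G → G
  | 0, α => α
  | i + 1, α => S.transport ((S.sl)^[i] x) (S.itTransport x i α)

/-- `𝔓_i(x) = 𝔭(x) 𝔭(𝔰(x)) ⋯ 𝔭(𝔰^{i-1}(x))`, with `𝔓₀(x) = 1`. -/
def PP (S : Garside G) (x : G) : ℕ → G
  | 0 => 1
  | i + 1 => S.PP x i * S.pp ((S.sl)^[i] x)

/-- The summit set `SS(x)`. -/
def SS (S : Garside G) (x : G) : Set G :=
  {y | IsConj x y ∧ ∀ z : G, IsConj x z → S.inf z ≤ S.inf y}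

/-- The super summit set `SSS(x)`. -/
def SSS (S : Garside G) (x : G) : Set G :=
  {y | IsConj x y ∧ (∀ z : G, IsConj x z → S.inf z ≤ S.inf y) ∧
       (∀ z : G, IsConj x z → S.sup y ≤ S.sup z)}

/-- The ultra summit set `USS(x)`. -/
def USS (S : Garside G) (x : G) : Set G :=
  {y | y ∈ S.SSS x ∧ ∃ m : ℕ, 1 ≤ m ∧ (S.cyc)^[m] y = y}

/-- The reduced super summit set `RSSS(x)`. -/
def RSSS (S : Garside G) (x : G) : Set G :=
  {y | IsConj x y ∧ (∃ m : ℕ, 1 ≤ m ∧ (S.cyc)^[m] y = y) ∧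
       (∃ n : ℕ, 1 ≤ n ∧ (S.dec)^[n] y = y)}

/-- The set of sliding circuits `SC(x)`. -/
def SC (S : Garside G) (x : G) : Set G :=
  {y | IsConj x y ∧ ∃ m : ℕ, 1 ≤ m ∧ (S.sl)^[m] y = y}

end Garside

namespace Garside

variable {G : Type*} [Group G]

/-- simple elements -/
abbrev Simple (S : Garside G) (a : G) : Prop := a ∈ S.P ∧ a⁻¹ * S.Δ ∈ S.P

/-- products of simples -/
def InQ (S : Garside G) (x : G) : Prop :=
  ∃ l : List G, (∀ s ∈ l, S.Simple s) ∧ l.prod = x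

variable {S : Garside G}

lemma le_trans' {a b c : G} (h1 : a⁻¹ * b ∈ S.P) (h2 : b⁻¹ * c ∈ S.P) :
    a⁻¹ * c ∈ S.P := by
  have h := mul_mem h1 h2
  rwa [show a⁻¹ * b * (b⁻¹ * c) = a⁻¹ * c by group] at h

lemma le_antisymm' {a b : G} (h1 : a⁻¹ * b ∈ S.P) (h2 : b⁻¹ * a ∈ S.P) : a = b := by
  have h := S.purity (a⁻¹ * b) h1 (by rwa [show (a⁻¹ * b)⁻¹ = b⁻¹ * a by group])
  exact inv_mul_eq_one.1 h

lemma simple_one : S.Simple 1 := ⟨one_mem _, by simpa using S.delta_mem⟩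

lemma tau_simple {a : G} (h : S.Simple a) : S.Simple (S.Δ⁻¹ * a * S.Δ) := by
  refine ⟨S.conj_pos a h.1, ?_⟩
  have h2 := S.conj_pos _ h.2
  rwa [show S.Δ⁻¹ * (a⁻¹ * S.Δ) * S.Δ = (S.Δ⁻¹ * a * S.Δ)⁻¹ * S.Δ by group] at h2

lemma tau_surj_simple {a : G} (h : S.Simple a) :
    ∃ t, S.Simple t ∧ S.Δ⁻¹ * t * S.Δ = a := by
  have hfin := S.simples_finite
  have hmaps : Set.MapsTo (fun x => S.Δ⁻¹ * x * S.Δ)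
      {a : G | a ∈ S.P ∧ a⁻¹ * S.Δ ∈ S.P} {a : G | a ∈ S.P ∧ a⁻¹ * S.Δ ∈ S.P} :=
    fun x hx => tau_simple hx
  have hinj : Set.InjOn (fun x => S.Δ⁻¹ * x * S.Δ)
      {a : G | a ∈ S.P ∧ a⁻¹ * S.Δ ∈ S.P} := by
    intro x _ y _ hxy
    exact mul_left_cancel (mul_right_cancel hxy)
  have hbij := (Set.Finite.injOn_iff_bijOn_of_mapsTo hfin hmaps).1 hinj
  obtain ⟨t, ht, hft⟩ := hbij.surjOn h
  exact ⟨t, ht, hft⟩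

lemma InQ.pos {x : G} (h : S.InQ x) : x ∈ S.P := by
  obtain ⟨l, hl, rfl⟩ := h
  induction l with
  | nil => simpa using one_mem S.P
  | cons s t ih =>
    rw [List.prod_cons]
    exact mul_mem (hl s (List.mem_cons_self)).1
      (ih (fun u hu => hl u (List.mem_cons_of_mem _ hu)))

lemma InQ.mul {x y : G} (hx : S.InQ x) (hy : S.InQ y) : S.InQ (x * y) := by
  obtain ⟨l, hl, rfl⟩ := hx
  obtain ⟨m, hm, rfl⟩ := hy
  refine ⟨l ++ m, ?_, by rw [List.prod_append]⟩
  intro s hs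
  rcases List.mem_append.1 hs with h | h
  · exact hl s h
  · exact hm s h

lemma InQ.conj_inv {x : G} (h : S.InQ x) : S.InQ (S.Δ * x * S.Δ⁻¹) := by
  obtain ⟨l, hl, rfl⟩ := h
  induction l with
  | nil => exact ⟨[], by simp, by simp⟩
  | cons s t ih =>
    obtain ⟨t0, ht0, h0⟩ := tau_surj_simple (hl s (List.mem_cons_self))
    obtain ⟨l', hl', hp'⟩ := ih (fun u hu => hl u (List.mem_cons_of_mem _ hu))
    refine ⟨t0 :: l', ?_, ?_⟩
    · intro u hu
      rcases List.mem_cons.1 hu with h | h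
      · rw [h]; exact ht0
      · exact hl' u h
    · have ht0e : t0 = S.Δ * s * S.Δ⁻¹ := by rw [← h0]; group
      rw [List.prod_cons, hp', ht0e, List.prod_cons]; group

lemma InQ.tau {x : G} (h : S.InQ x) : S.InQ (S.Δ⁻¹ * x * S.Δ) := by
  obtain ⟨l, hl, rfl⟩ := h
  induction l with
  | nil => exact ⟨[], by simp, by simp⟩
  | cons s t ih =>
    obtain ⟨l', hl', hp'⟩ := ih (fun u hu => hl u (List.mem_cons_of_mem _ hu))
    refine ⟨(S.Δ⁻¹ * s * S.Δ) :: l', ?_, ?_⟩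
    · intro u hu
      rcases List.mem_cons.1 hu with h | h
      · rw [h]; exact tau_simple (hl s (List.mem_cons_self))
      · exact hl' u h
    · rw [List.prod_cons, hp', List.prod_cons]; group

lemma wedge_pos {a b : G} (ha : a ∈ S.P) (hb : b ∈ S.P) : S.wedge a b ∈ S.P := by
  have h := S.le_wedge a b 1 (by simpa using ha) (by simpa using hb)
  simpa using h

/-- the key lemma : Δ ∧ ab ≼ a (Δ ∧ b) -/
lemma key {a b : G} (ha : a ∈ S.P) (hb : b ∈ S.P) :
    (S.wedge S.Δ (a * b))⁻¹ * (a * S.wedge S.Δ b) ∈ S.P := by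
  have hud : (S.wedge S.Δ (a * b))⁻¹ * (a * (a⁻¹ * S.vee a (S.wedge S.Δ (a * b)))) ∈ S.P := by
    rw [show a * (a⁻¹ * S.vee a (S.wedge S.Δ (a * b))) = S.vee a (S.wedge S.Δ (a * b)) by
      group]
    exact S.le_vee_right a (S.wedge S.Δ (a * b))
  have hub : (a⁻¹ * S.vee a (S.wedge S.Δ (a * b)))⁻¹ * b ∈ S.P := by
    have h1 : (S.vee a (S.wedge S.Δ (a * b)))⁻¹ * (a * b) ∈ S.P :=
      S.vee_le a _ (a * b) (by rw [show a⁻¹ * (a * b) = b by group]; exact hb)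
        (S.wedge_le_right _ _)
    rwa [show (a⁻¹ * S.vee a (S.wedge S.Δ (a * b)))⁻¹ * b
        = (S.vee a (S.wedge S.Δ (a * b)))⁻¹ * (a * b) by group]
  have huD : (a⁻¹ * S.vee a (S.wedge S.Δ (a * b)))⁻¹ * S.Δ ∈ S.P := by
    have haD : S.Δ⁻¹ * (a * S.Δ) ∈ S.P := by
      have h := S.conj_pos a ha
      rwa [mul_assoc] at h
    have h2 : (S.vee a (S.wedge S.Δ (a * b)))⁻¹ * (a * S.Δ) ∈ S.P :=
      S.vee_le a _ (a * S.Δ) (by rw [show a⁻¹ * (a * S.Δ) = S.Δ by group]; exact S.delta_mem)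
        (le_trans' (S.wedge_le_left S.Δ (a * b)) haD)
    rwa [show (a⁻¹ * S.vee a (S.wedge S.Δ (a * b)))⁻¹ * S.Δ
        = (S.vee a (S.wedge S.Δ (a * b)))⁻¹ * (a * S.Δ) by group]
  have huw := S.le_wedge S.Δ b _ huD hub
  refine le_trans' hud ?_
  rwa [show (a * (a⁻¹ * S.vee a (S.wedge S.Δ (a * b))))⁻¹ * (a * S.wedge S.Δ b)
      = (a⁻¹ * S.vee a (S.wedge S.Δ (a * b)))⁻¹ * S.wedge S.Δ b by group]

lemma head_list : ∀ l : List G, (∀ s ∈ l, S.Simple s) →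
    S.Simple (S.wedge S.Δ l.prod) ∧ S.InQ ((S.wedge S.Δ l.prod)⁻¹ * l.prod) := by
  intro l
  induction l with
  | nil =>
    intro _
    simp only [List.prod_nil]
    have h1 : S.wedge S.Δ 1 = 1 := by
      apply le_antisymm'
      · have h := S.wedge_le_right S.Δ 1; exact h
      · have h := S.le_wedge S.Δ 1 1 (by simpa using S.delta_mem) (by simpa using one_mem S.P)
        simpa using h
    rw [h1]
    exact ⟨simple_one, ⟨[], by simp, by simp⟩⟩
  | cons s t ih =>
    intro hl
    have hs : S.Simple s := hl s (List.mem_cons_self)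
    have ht : ∀ u ∈ t, S.Simple u := fun u hu => hl u (List.mem_cons_of_mem _ hu)
    obtain ⟨hh''s, r, hr, hrprod⟩ := ih ht
    have hyP : t.prod ∈ S.P := InQ.pos ⟨t, ht, rfl⟩
    have hh''P : S.wedge S.Δ t.prod ∈ S.P := wedge_pos S.delta_mem hyP
    rw [List.prod_cons]
    have hm_eq : S.wedge S.Δ (s * t.prod) = S.wedge S.Δ (s * S.wedge S.Δ t.prod) := by
      apply le_antisymm'
      · exact S.le_wedge S.Δ (s * S.wedge S.Δ t.prod) _ (S.wedge_le_left _ _) (key hs.1 hyP)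
      · refine S.le_wedge S.Δ (s * t.prod) _ (S.wedge_le_left _ _) ?_
        refine le_trans' (S.wedge_le_right S.Δ (s * S.wedge S.Δ t.prod)) ?_
        rw [show (s * S.wedge S.Δ t.prod)⁻¹ * (s * t.prod)
            = (S.wedge S.Δ t.prod)⁻¹ * t.prod by group]
        exact S.wedge_le_right S.Δ t.prod
    have hm'P : S.wedge S.Δ (s * S.wedge S.Δ t.prod) ∈ S.P :=
      wedge_pos S.delta_mem (mul_mem hs.1 hh''P)
    have hm'simple : S.Simple (S.wedge S.Δ (s * S.wedge S.Δ t.prod)) :=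
      ⟨hm'P, S.wedge_le_left _ _⟩
    have hsm : s⁻¹ * S.wedge S.Δ (s * S.wedge S.Δ t.prod) ∈ S.P := by
      refine S.le_wedge S.Δ (s * S.wedge S.Δ t.prod) s hs.2 ?_
      rw [show s⁻¹ * (s * S.wedge S.Δ t.prod) = S.wedge S.Δ t.prod by group]
      exact hh''P
    have hch : (s⁻¹ * S.wedge S.Δ (s * S.wedge S.Δ t.prod))⁻¹ * S.wedge S.Δ t.prod ∈ S.P := by
      have h := S.wedge_le_right S.Δ (s * S.wedge S.Δ t.prod)
      rwa [show (S.wedge S.Δ (s * S.wedge S.Δ t.prod))⁻¹ * (s * S.wedge S.Δ t.prod)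
          = (s⁻¹ * S.wedge S.Δ (s * S.wedge S.Δ t.prod))⁻¹ * S.wedge S.Δ t.prod by group] at h
    have hsuffix : S.Simple ((s⁻¹ * S.wedge S.Δ (s * S.wedge S.Δ t.prod))⁻¹
        * S.wedge S.Δ t.prod) := by
      refine ⟨hch, ?_⟩
      rw [show ((s⁻¹ * S.wedge S.Δ (s * S.wedge S.Δ t.prod))⁻¹ * S.wedge S.Δ t.prod)⁻¹ * S.Δ
          = ((S.wedge S.Δ t.prod)⁻¹ * S.Δ)
            * (S.Δ⁻¹ * (s⁻¹ * S.wedge S.Δ (s * S.wedge S.Δ t.prod)) * S.Δ) by group]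
      exact mul_mem hh''s.2 (S.conj_pos _ hsm)
    rw [hm_eq]
    refine ⟨hm'simple,
      ⟨((s⁻¹ * S.wedge S.Δ (s * S.wedge S.Δ t.prod))⁻¹ * S.wedge S.Δ t.prod) :: r, ?_, ?_⟩⟩
    · intro u hu
      rcases List.mem_cons.1 hu with h | h
      · rw [h]; exact hsuffix
      · exact hr u h
    · rw [List.prod_cons, hrprod]; group

lemma head {x : G} (h : S.InQ x) :
    S.Simple (S.wedge S.Δ x) ∧ S.InQ ((S.wedge S.Δ x)⁻¹ * x) := by
  obtain ⟨l, hl, rfl⟩ := h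
  exact head_list l hl

lemma inQ_conj_pow : ∀ (n : ℕ) (q : G), S.InQ q → S.InQ (S.Δ ^ n * q * (S.Δ ^ n)⁻¹) := by
  intro n
  induction n with
  | zero => intro q hq; simpa using hq
  | succ n ih =>
    intro q hq
    have h := ih _ (InQ.conj_inv hq)
    rwa [show S.Δ ^ n * (S.Δ * q * S.Δ⁻¹) * (S.Δ ^ n)⁻¹
        = S.Δ ^ (n + 1) * q * (S.Δ ^ (n + 1))⁻¹ by rw [pow_succ]; group] at h

lemma inQ_conj_pow' : ∀ (n : ℕ) (q : G), S.InQ q → S.InQ ((S.Δ ^ n)⁻¹ * q * S.Δ ^ n) := by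
  intro n
  induction n with
  | zero => intro q hq; simpa using hq
  | succ n ih =>
    intro q hq
    have h := ih _ (InQ.tau hq)
    rwa [show (S.Δ ^ n)⁻¹ * (S.Δ⁻¹ * q * S.Δ) * S.Δ ^ n
        = (S.Δ ^ (n + 1))⁻¹ * q * S.Δ ^ (n + 1) by rw [pow_succ]; group] at h

lemma qinv : ∀ l : List G, (∀ s ∈ l, S.Simple s) →
    S.InQ (l.prod⁻¹ * S.Δ ^ l.length) := by
  intro l
  induction l with
  | nil => exact fun _ => ⟨[], by simp, by simp⟩
  | cons s t ih =>
    intro hl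
    have hs : S.Simple s := hl s (List.mem_cons_self)
    have h1 := ih (fun u hu => hl u (List.mem_cons_of_mem _ hu))
    have hsq : S.InQ (s⁻¹ * S.Δ) := by
      refine ⟨[s⁻¹ * S.Δ], ?_, by simp⟩
      intro u hu
      rw [List.mem_singleton.1 hu]
      refine ⟨hs.2, ?_⟩
      rw [show (s⁻¹ * S.Δ)⁻¹ * S.Δ = S.Δ⁻¹ * s * S.Δ by group]
      exact S.conj_pos s hs.1
    have h2 : S.InQ ((S.Δ ^ t.length)⁻¹ * (s⁻¹ * S.Δ) * S.Δ ^ t.length) :=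
      inQ_conj_pow' t.length _ hsq
    have h3 := InQ.mul h1 h2
    rwa [show t.prod⁻¹ * S.Δ ^ t.length * ((S.Δ ^ t.length)⁻¹ * (s⁻¹ * S.Δ) * S.Δ ^ t.length)
        = (s :: t).prod⁻¹ * S.Δ ^ (s :: t).length by
      rw [List.prod_cons, List.length_cons, pow_succ]; group] at h3

lemma pos_inQ {a : G} (ha : a ∈ S.P) : S.InQ a := by
  classical
  let K : Subgroup G :=
    { carrier := {x : G | ∃ n : ℕ, S.InQ (S.Δ ^ n * x)}
      one_mem' := ⟨0, by have h1 : S.InQ 1 := ⟨[], by simp, by simp⟩; simpa using h1⟩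
      mul_mem' := by
        rintro x y ⟨n, hx⟩ ⟨m, hy⟩
        refine ⟨n + m, ?_⟩
        have h := InQ.mul (inQ_conj_pow m _ hx) hy
        rwa [show S.Δ ^ m * (S.Δ ^ n * x) * (S.Δ ^ m)⁻¹ * (S.Δ ^ m * y)
            = S.Δ ^ (n + m) * (x * y) by rw [pow_add]; group] at h
      inv_mem' := by
        rintro x ⟨n, hx⟩
        obtain ⟨l, hl, hp⟩ := hx
        have hl2 : ∀ s ∈ l ++ List.replicate n 1, S.Simple s := by
          intro s hs
          rcases List.mem_append.1 hs with h | h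
          · exact hl s h
          · rw [List.eq_of_mem_replicate h]; exact simple_one
        have hp2 : (l ++ List.replicate n 1).prod = S.Δ ^ n * x := by
          rw [List.prod_append, List.prod_replicate, one_pow, mul_one, hp]
        have hlen2 : (l ++ List.replicate n 1).length = l.length + n := by simp
        have hq := qinv _ hl2
        rw [hp2, hlen2] at hq
        refine ⟨l.length, ?_⟩
        have h := inQ_conj_pow l.length _ hq
        rwa [show S.Δ ^ l.length * ((S.Δ ^ n * x)⁻¹ * S.Δ ^ (l.length + n)) * (S.Δ ^ l.length)⁻¹
            = S.Δ ^ l.length * x⁻¹ by rw [pow_add]; group] at h }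
  have hK : a ∈ K := by
    have hcl : Subgroup.closure {b : G | b ∈ S.P ∧ b⁻¹ * S.Δ ∈ S.P} ≤ K := by
      apply Subgroup.closure_le K |>.2
      intro s hs
      exact ⟨0, by have h1 : S.InQ s := ⟨[s], by simpa using hs, by simp⟩; simpa using h1⟩
    have : a ∈ Subgroup.closure {b : G | b ∈ S.P ∧ b⁻¹ * S.Δ ∈ S.P} := by
      rw [S.simples_generate]; trivial
    exact hcl this
  obtain ⟨n, hq⟩ := hK
  induction n generalizing a with
  | zero => simpa using hq
  | succ n ih =>
    have h' : S.InQ (S.Δ * (S.Δ ^ n * a)) := by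
      rwa [show S.Δ ^ (n + 1) * a = S.Δ * (S.Δ ^ n * a) by rw [pow_succ]; group] at hq
    have hDle : S.Δ⁻¹ * (S.Δ * (S.Δ ^ n * a)) ∈ S.P := by
      rw [show S.Δ⁻¹ * (S.Δ * (S.Δ ^ n * a)) = S.Δ ^ n * a by group]
      exact mul_mem (pow_mem S.delta_mem n) ha
    have hw := head h'
    have hwe : S.wedge S.Δ (S.Δ * (S.Δ ^ n * a)) = S.Δ :=
      le_antisymm' (S.wedge_le_left _ _)
        (S.le_wedge _ _ S.Δ (by simpa using one_mem S.P) hDle)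
    have h2 := hw.2
    rw [hwe, show S.Δ⁻¹ * (S.Δ * (S.Δ ^ n * a)) = S.Δ ^ n * a by group] at h2
    have : S.Δ ^ n * a ∈ S.P := mul_mem (pow_mem S.delta_mem n) ha
    -- need: a ∈ P and InQ (Δ^n * a); but ih is for a. Apply ih to a with hq := h2? h2 : InQ (Δ^n * a)
    exact ih ha h2

lemma conj_inv_pos {a : G} (ha : a ∈ S.P) : S.Δ * a * S.Δ⁻¹ ∈ S.P :=
  InQ.pos (InQ.conj_inv (pos_inQ ha))

lemma conj_zpow (n : ℤ) {a : G} (ha : a ∈ S.P) : S.Δ ^ n * a * (S.Δ ^ n)⁻¹ ∈ S.P := by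
  induction n using Int.induction_on with
  | zero => simpa using ha
  | succ k ih =>
    have h := conj_inv_pos ih
    rwa [show S.Δ * (S.Δ ^ (k : ℤ) * a * (S.Δ ^ (k : ℤ))⁻¹) * S.Δ⁻¹
        = S.Δ ^ ((k : ℤ) + 1) * a * (S.Δ ^ ((k : ℤ) + 1))⁻¹ by rw [zpow_add_one]; group] at h
  | pred k ih =>
    have h := S.conj_pos _ ih
    rwa [show S.Δ⁻¹ * (S.Δ ^ (-(k : ℤ)) * a * (S.Δ ^ (-(k : ℤ)))⁻¹) * S.Δ
        = S.Δ ^ (-(k : ℤ) - 1) * a * (S.Δ ^ (-(k : ℤ) - 1))⁻¹ by rw [zpow_sub_one]; group] at h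

lemma tau_pow (k : ℕ) {a : G} (ha : a ∈ S.P) : (S.Δ ^ k)⁻¹ * a * S.Δ ^ k ∈ S.P := by
  induction k with
  | zero => simpa using ha
  | succ k ih =>
    have h := S.conj_pos _ ih
    rwa [show S.Δ⁻¹ * ((S.Δ ^ k)⁻¹ * a * S.Δ ^ k) * S.Δ
        = (S.Δ ^ (k + 1))⁻¹ * a * S.Δ ^ (k + 1) by rw [pow_succ]; group] at h

lemma inf_inv' (y : G) : S.inf y⁻¹ = - S.sup y := by
  apply _root_.le_antisymm
  · have h := S.inf_le y⁻¹
    have h2 : y⁻¹ * S.Δ ^ (-S.inf y⁻¹) ∈ S.P := by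
      have h3 := conj_zpow (S.inf y⁻¹) h
      rwa [show S.Δ ^ S.inf y⁻¹ * ((S.Δ ^ S.inf y⁻¹)⁻¹ * y⁻¹) * (S.Δ ^ S.inf y⁻¹)⁻¹
          = y⁻¹ * S.Δ ^ (-S.inf y⁻¹) by group] at h3
    have h4 := S.sup_min y _ h2
    linarith
  · have h := S.le_sup y
    have h2 : (S.Δ ^ (-S.sup y))⁻¹ * y⁻¹ ∈ S.P := by
      have h3 := conj_zpow (S.sup y) h
      rwa [show S.Δ ^ S.sup y * (y⁻¹ * S.Δ ^ S.sup y) * (S.Δ ^ S.sup y)⁻¹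
          = (S.Δ ^ (-S.sup y))⁻¹ * y⁻¹ by group] at h3
    exact S.inf_max y⁻¹ _ h2

lemma iota_pos (y : G) : S.iota y ∈ S.P := by
  have h := S.inf_le y
  have h1 : y * S.Δ ^ (-S.inf y) ∈ S.P := by
    have h2 := conj_zpow (S.inf y) h
    rwa [show S.Δ ^ S.inf y * ((S.Δ ^ S.inf y)⁻¹ * y) * (S.Δ ^ S.inf y)⁻¹
        = y * S.Δ ^ (-S.inf y) by group] at h2
  exact wedge_pos h1 S.delta_mem

lemma pp_pos (y : G) : S.pp y ∈ S.P := wedge_pos (iota_pos y) (iota_pos y⁻¹)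

lemma pp_le_first (y : G) : (S.pp y)⁻¹ * (y * S.Δ ^ (-S.inf y)) ∈ S.P :=
  le_trans' (S.wedge_le_left (S.iota y) (S.iota y⁻¹)) (S.wedge_le_left _ _)

lemma pp_le_second (y : G) : (S.pp y)⁻¹ * (y⁻¹ * S.Δ ^ S.sup y) ∈ S.P := by
  have h := le_trans' (S.wedge_le_right (S.iota y) (S.iota y⁻¹))
    (S.wedge_le_left (y⁻¹ * S.Δ ^ (-S.inf y⁻¹)) S.Δ)
  rwa [inf_inv', neg_neg] at h

lemma sl_inf (y : G) : (S.Δ ^ S.inf y)⁻¹ * S.sl y ∈ S.P := by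
  have h1 := pp_le_first (S := S) y
  have h2 := conj_zpow (-S.inf y) h1
  have h3 : (S.Δ ^ S.inf y)⁻¹ * ((S.pp y)⁻¹ * y) ∈ S.P := by
    rwa [show S.Δ ^ (-S.inf y) * ((S.pp y)⁻¹ * (y * S.Δ ^ (-S.inf y))) * (S.Δ ^ (-S.inf y))⁻¹
        = (S.Δ ^ S.inf y)⁻¹ * ((S.pp y)⁻¹ * y) by group] at h2
  have h4 := mul_mem h3 (pp_pos y)
  show (S.Δ ^ S.inf y)⁻¹ * ((S.pp y)⁻¹ * y * S.pp y) ∈ S.P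
  rwa [show (S.Δ ^ S.inf y)⁻¹ * ((S.pp y)⁻¹ * y) * S.pp y
      = (S.Δ ^ S.inf y)⁻¹ * ((S.pp y)⁻¹ * y * S.pp y) by group] at h4

lemma sl_sup (y : G) : (S.sl y)⁻¹ * S.Δ ^ S.sup y ∈ S.P := by
  have h1 := pp_le_second (S := S) y
  have h2 := conj_zpow (-S.sup y) (pp_pos (S := S) y)
  have h := mul_mem h1 h2
  show ((S.pp y)⁻¹ * y * S.pp y)⁻¹ * S.Δ ^ S.sup y ∈ S.P
  rwa [show (S.pp y)⁻¹ * (y⁻¹ * S.Δ ^ S.sup y)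
        * (S.Δ ^ (-S.sup y) * S.pp y * (S.Δ ^ (-S.sup y))⁻¹)
      = ((S.pp y)⁻¹ * y * S.pp y)⁻¹ * S.Δ ^ S.sup y by group] at h

lemma norm_one_le {y : G} (hy : y ∈ S.P) (hne : y ≠ 1) : 1 ≤ S.norm y := by
  have h := S.norm_max y hy hne [y] ?_ (by simp)
  · simpa using h
  · intro s hs
    rw [List.mem_singleton.1 hs]
    exact ⟨hy, hne⟩

lemma wedge_delta_ne_one : ∀ l : List G, (∀ s ∈ l, S.Simple s) → l.prod ≠ 1 →
    S.wedge S.Δ l.prod ≠ 1 := by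
  intro l
  induction l with
  | nil => intro _ hne; simp at hne
  | cons s t ih =>
    intro hl hne
    by_cases hs1 : s = 1
    · rw [List.prod_cons, hs1, one_mul]
      rw [List.prod_cons, hs1, one_mul] at hne
      exact ih (fun u hu => hl u (List.mem_cons_of_mem _ hu)) hne
    · intro hwe
      have hs : S.Simple s := hl s (List.mem_cons_self)
      have htP : t.prod ∈ S.P := InQ.pos ⟨t, fun u hu => hl u (List.mem_cons_of_mem _ hu), rfl⟩
      have hsw : s⁻¹ * S.wedge S.Δ (s :: t).prod ∈ S.P := by
        refine S.le_wedge S.Δ ((s :: t).prod) s hs.2 ?_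
        rw [List.prod_cons, show s⁻¹ * (s * t.prod) = t.prod by group]
        exact htP
      rw [hwe] at hsw
      exact hs1 (S.purity s hs.1 (by simpa using hsw))

lemma norm_le_of_le {y z : G} (hy : y ∈ S.P) (hyne : y ≠ 1) (hz : z ∈ S.P) (hzne : z ≠ 1)
    (h : y⁻¹ * z ∈ S.P) : S.norm y ≤ S.norm z := by
  obtain ⟨l, hl, hp, hlen⟩ := S.norm_exists y hy hyne
  by_cases hc : y⁻¹ * z = 1
  · rw [inv_mul_eq_one.1 hc]
  · have hmax := S.norm_max z hz hzne (l ++ [y⁻¹ * z]) ?_ ?_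
    · rw [List.length_append, List.length_singleton, hlen] at hmax
      omega
    · intro s hs
      rcases List.mem_append.1 hs with h1 | h1
      · exact hl s h1
      · rw [List.mem_singleton.1 h1]; exact ⟨h, hc⟩
    · rw [List.prod_append, List.prod_singleton, hp]; group

lemma interval_desc (k : ℕ) : ∀ (n : ℕ) (y : G), y ∈ S.P → y⁻¹ * S.Δ ^ k ∈ S.P →
    (y = 1 ∨ S.norm y ≤ n) →
    ∃ l : List G, (∀ s ∈ l, S.Simple s) ∧ l.length ≤ n ∧ l.prod = y := by
  intro n
  induction n with
  | zero =>
    intro y hy _ hn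
    have hy1 : y = 1 := by
      rcases hn with h | h
      · exact h
      · by_contra hne
        have := norm_one_le hy hne
        omega
    exact ⟨[], by simp, by simp, by simp [hy1]⟩
  | succ n ih =>
    intro y hy hle hn
    by_cases hy1 : y = 1
    · exact ⟨[], by simp, by simp, by simp [hy1]⟩
    obtain ⟨lq, hlq, hlqp⟩ := pos_inQ hy
    obtain ⟨hhs, hcomp⟩ := head (⟨lq, hlq, hlqp⟩ : S.InQ y)
    have hne : S.wedge S.Δ y ≠ 1 := by
      have := wedge_delta_ne_one lq hlq (by rw [hlqp]; exact hy1)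
      rwa [hlqp] at this
    have hy' : (S.wedge S.Δ y)⁻¹ * y ∈ S.P := S.wedge_le_right S.Δ y
    have hle' : ((S.wedge S.Δ y)⁻¹ * y)⁻¹ * S.Δ ^ k ∈ S.P := by
      have c1 := tau_pow k hhs.1
      have c2 := mul_mem hle c1
      rwa [show y⁻¹ * S.Δ ^ k * ((S.Δ ^ k)⁻¹ * S.wedge S.Δ y * S.Δ ^ k)
          = ((S.wedge S.Δ y)⁻¹ * y)⁻¹ * S.Δ ^ k by group] at c2
    by_cases hy'1 : (S.wedge S.Δ y)⁻¹ * y = 1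
    · refine ⟨[S.wedge S.Δ y], ?_, by simp, ?_⟩
      · intro u hu; rw [List.mem_singleton.1 hu]; exact hhs
      · rw [List.prod_singleton]
        exact inv_mul_eq_one.1 hy'1
    · have hnorm : S.norm ((S.wedge S.Δ y)⁻¹ * y) ≤ n := by
        have hyn : S.norm y ≤ n + 1 := by
          rcases hn with h | h
          · exact absurd h hy1
          · exact h
        obtain ⟨l', hl', hp', hlen'⟩ := S.norm_exists _ hy' hy'1
        have hmax := S.norm_max y hy hy1 (S.wedge S.Δ y :: l') ?_ ?_
        · rw [List.length_cons, hlen'] at hmax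
          omega
        · intro u hu
          rcases List.mem_cons.1 hu with h1 | h1
          · rw [h1]; exact ⟨hhs.1, hne⟩
          · exact hl' u h1
        · rw [List.prod_cons, hp']; group
      obtain ⟨l, hl, hlen, hp⟩ := ih _ hy' hle' (Or.inr hnorm)
      refine ⟨S.wedge S.Δ y :: l, ?_, by simpa using hlen, ?_⟩
      · intro u hu
        rcases List.mem_cons.1 hu with h1 | h1
        · rw [h1]; exact hhs
        · exact hl u h1
      · rw [List.prod_cons, hp]; group

lemma interval_finite (k : ℕ) :
    Set.Finite {y : G | y ∈ S.P ∧ y⁻¹ * S.Δ ^ k ∈ S.P} := by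
  by_cases hk : (S.Δ : G) ^ k = 1
  · apply Set.Finite.subset (Set.finite_singleton 1)
    rintro y ⟨h1, h2⟩
    rw [hk, mul_one] at h2
    exact S.purity y h1 h2
  · have hb : ∀ y ∈ {y : G | y ∈ S.P ∧ y⁻¹ * S.Δ ^ k ∈ S.P},
        ∃ l : List G, (∀ s ∈ l, S.Simple s) ∧ l.length ≤ S.norm (S.Δ ^ k) ∧ l.prod = y := by
      rintro y ⟨hy, hle⟩
      apply interval_desc k _ y hy hle
      by_cases hy1 : y = 1
      · exact Or.inl hy1
      · exact Or.inr (norm_le_of_le hy hy1 (pow_mem S.delta_mem k) hk hle)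
    haveI : Finite {a : G // a ∈ S.P ∧ a⁻¹ * S.Δ ∈ S.P} := S.simples_finite.to_subtype
    have hfin : Set.Finite ((fun l : List {a : G // a ∈ S.P ∧ a⁻¹ * S.Δ ∈ S.P} =>
        (l.map Subtype.val).prod) '' {l | l.length ≤ S.norm (S.Δ ^ k)}) :=
      Set.Finite.image _ (List.finite_length_le _ _)
    apply hfin.subset
    intro y hy
    obtain ⟨l, hl, hlen, hp⟩ := hb y hy
    refine ⟨l.attach.map (fun x => ⟨x.1, hl x.1 x.2⟩), by simpa using hlen, ?_⟩
    simp only [List.map_map]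
    have h2 : List.map (Subtype.val ∘ fun x : {x // x ∈ l} => (⟨x.1, hl x.1 x.2⟩ :
        {a : G // a ∈ S.P ∧ a⁻¹ * S.Δ ∈ S.P})) l.attach = l := by
      simp
    rw [h2, hp]

lemma delta_zpow_le {m n : ℤ} (h : m ≤ n) : (S.Δ ^ m)⁻¹ * S.Δ ^ n ∈ S.P := by
  have he : (S.Δ ^ m)⁻¹ * S.Δ ^ n = S.Δ ^ ((n - m).toNat : ℕ) := by
    rw [← zpow_natCast, Int.toNat_of_nonneg (by omega)]
    group
  rw [he]
  exact pow_mem S.delta_mem _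

end Garside

open Garside in
theorem statement1 {G : Type*} [Group G] (S : Garside G) (x : G) :
    ∃ (N M : ℕ), 0 < M ∧ (S.sl)^[M + N] x = (S.sl)^[N] x := by
  classical
  have inv : ∀ k : ℕ, (S.Δ ^ S.inf x)⁻¹ * (S.sl)^[k] x ∈ S.P ∧
      ((S.sl)^[k] x)⁻¹ * S.Δ ^ S.sup x ∈ S.P := by
    intro k
    induction k with
    | zero => exact ⟨S.inf_le x, S.le_sup x⟩
    | succ k ih =>
      obtain ⟨h1, h2⟩ := ih
      rw [Function.iterate_succ_apply']
      constructor
      · have hp : S.inf x ≤ S.inf ((S.sl)^[k] x) := S.inf_max _ _ h1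
        exact le_trans' (delta_zpow_le hp) (sl_inf _)
      · have hq : S.sup ((S.sl)^[k] x) ≤ S.sup x := S.sup_min _ _ h2
        exact le_trans' (sl_sup _) (delta_zpow_le hq)
  have hd : ∃ d : ℕ, (S.Δ : G) ^ (S.sup x - S.inf x) = S.Δ ^ d := by
    rcases le_or_gt (S.inf x) (S.sup x) with h | h
    · exact ⟨(S.sup x - S.inf x).toNat, by
        rw [← zpow_natCast, Int.toNat_of_nonneg (by omega)]⟩
    · have h1 : (S.Δ : G) ^ (S.sup x - S.inf x) ∈ S.P := by
        have h0 := le_trans' (S.inf_le x) (S.le_sup x)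
        rwa [show (S.Δ ^ S.inf x)⁻¹ * S.Δ ^ S.sup x = S.Δ ^ (S.sup x - S.inf x) by group] at h0
      have h2 : ((S.Δ : G) ^ (S.sup x - S.inf x))⁻¹ ∈ S.P := by
        have he : ((S.Δ : G) ^ (S.sup x - S.inf x))⁻¹ = S.Δ ^ ((S.inf x - S.sup x).toNat : ℕ) := by
          rw [← zpow_natCast, Int.toNat_of_nonneg (by omega)]
          group
        rw [he]
        exact pow_mem S.delta_mem _
      exact ⟨0, by rw [pow_zero]; exact S.purity _ h1 h2⟩
  obtain ⟨d, hd⟩ := hd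
  have hfin : Set.Finite ((fun z => S.Δ ^ S.inf x * z) ''
      {y : G | y ∈ S.P ∧ y⁻¹ * S.Δ ^ d ∈ S.P}) :=
    (interval_finite d).image _
  have hmaps : Set.MapsTo (fun k : ℕ => (S.sl)^[k] x) Set.univ
      ((fun z => S.Δ ^ S.inf x * z) '' {y : G | y ∈ S.P ∧ y⁻¹ * S.Δ ^ d ∈ S.P}) := by
    intro k _
    obtain ⟨h1, h2⟩ := inv k
    refine ⟨(S.Δ ^ S.inf x)⁻¹ * (S.sl)^[k] x, ⟨h1, ?_⟩, by group⟩
    rw [← hd]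
    rwa [show ((S.Δ ^ S.inf x)⁻¹ * (S.sl)^[k] x)⁻¹ * S.Δ ^ (S.sup x - S.inf x)
        = ((S.sl)^[k] x)⁻¹ * S.Δ ^ S.sup x by group]
  obtain ⟨i, -, j, -, hij, heq⟩ := Set.infinite_univ.exists_ne_map_eq_of_mapsTo hmaps hfin
  rcases hij.lt_or_gt with h | h
  · exact ⟨i, j - i, by omega, by rw [show j - i + i = j by omega]; exact heq.symm⟩
  · exact ⟨j, i - j, by omega, by rw [show i - j + j = i by omega]; exact heq⟩


end GarsidePaper
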